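/- Let f : ℝ^m → ℝ and g : ℝ^n → ℝ be convex, X ⊆ ℝ^m, Y ⊆ ℝ^n closed convex, A ∈ ℝ^{l×m}, B ∈ ℝ^{l×n}, c ∈ ℝ^l, τ ≠ 0, M = X × Y × ℝ^l, φ(x, y) = f(x) + g(y), J(x, y, λ) = τ(−Aᵀλ, −Bᵀλ, Ax + By − c), and let G be a symmetric positive definite (m+n+l)×(m+n+l) matrix. Suppose w̃^{k+1} ∈ M satisfies φ(u) − φ(ũ^{k+1}) + ⟨w − w̃^{k+1}, J(w̃^{k+1}) + G(w̃^{k+1} − w^k)⟩ ≥ 0 for all w ∈ M, let γ ∈ (0, 2), and set w^{k+1} = w^k + γ(w̃^{k+1} − w^k). Then for every solution w* ∈ M of the variational inequality (i.e., φ(u) − φ(u*) + ⟨w − w*, J(w*)⟩ ≥ 0 for all w ∈ M), ‖w^{k+1} − w*‖_G² ≤ ‖w^k − w*‖_G² − γ(2 − γ)‖w̃^{k+1} − w^k‖_G². -/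

import Mathlib

open Matrix

lemma dot_elim' {m n l : ℕ} (v : (Fin m ⊕ (Fin n ⊕ Fin l)) → ℝ)
    (a : Fin m → ℝ) (b : Fin n → ℝ) (c : Fin l → ℝ) :
    v ⬝ᵥ Sum.elim a (Sum.elim b c) =
      (v ∘ Sum.inl) ⬝ᵥ a + (v ∘ Sum.inr ∘ Sum.inl) ⬝ᵥ b + (v ∘ Sum.inr ∘ Sum.inr) ⬝ᵥ c := by
  simp [dotProduct, Fintype.sum_sum_type, Function.comp, add_assoc]

lemma skewJ {m n l : ℕ} (A : Matrix (Fin l) (Fin m) ℝ) (B : Matrix (Fin l) (Fin n) ℝ)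
    (c : Fin l → ℝ) (τ : ℝ)
    (J : ((Fin m ⊕ (Fin n ⊕ Fin l)) → ℝ) → ((Fin m ⊕ (Fin n ⊕ Fin l)) → ℝ))
    (hJ : J = fun w => Sum.elim (τ • (-(Aᵀ *ᵥ (w ∘ Sum.inr ∘ Sum.inr))))
        (Sum.elim (τ • (-(Bᵀ *ᵥ (w ∘ Sum.inr ∘ Sum.inr))))
          (τ • (A *ᵥ (w ∘ Sum.inl) + B *ᵥ (w ∘ Sum.inr ∘ Sum.inl) - c))))
    (u v : (Fin m ⊕ (Fin n ⊕ Fin l)) → ℝ) :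
    (u - v) ⬝ᵥ J u = (u - v) ⬝ᵥ J v := by
  subst hJ
  simp only [dot_elim']
  set p := u - v with hp
  have hx : (p ∘ Sum.inl) = (u ∘ Sum.inl) - (v ∘ Sum.inl) := rfl
  have hy : (p ∘ Sum.inr ∘ Sum.inl) = (u ∘ Sum.inr ∘ Sum.inl) - (v ∘ Sum.inr ∘ Sum.inl) := rfl
  have hl : (p ∘ Sum.inr ∘ Sum.inr) = (u ∘ Sum.inr ∘ Sum.inr) - (v ∘ Sum.inr ∘ Sum.inr) := rfl
  have e1 : ∀ lam : Fin l → ℝ, (p ∘ Sum.inl) ⬝ᵥ (τ • (-(Aᵀ *ᵥ lam)))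
      = -(τ * (lam ⬝ᵥ (A *ᵥ (p ∘ Sum.inl)))) := by
    intro lam
    rw [dotProduct_smul, dotProduct_neg, dotProduct_mulVec, vecMul_transpose,
      dotProduct_comm, smul_eq_mul]
    ring
  have e2 : ∀ lam : Fin l → ℝ, (p ∘ Sum.inr ∘ Sum.inl) ⬝ᵥ (τ • (-(Bᵀ *ᵥ lam)))
      = -(τ * (lam ⬝ᵥ (B *ᵥ (p ∘ Sum.inr ∘ Sum.inl)))) := by
    intro lam
    rw [dotProduct_smul, dotProduct_neg, dotProduct_mulVec, vecMul_transpose,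
      dotProduct_comm, smul_eq_mul]
    ring
  have e3 : ∀ (x : Fin m → ℝ) (y : Fin n → ℝ),
      (p ∘ Sum.inr ∘ Sum.inr) ⬝ᵥ (τ • (A *ᵥ x + B *ᵥ y - c))
      = τ * ((p ∘ Sum.inr ∘ Sum.inr) ⬝ᵥ (A *ᵥ x)
          + (p ∘ Sum.inr ∘ Sum.inr) ⬝ᵥ (B *ᵥ y)
          - (p ∘ Sum.inr ∘ Sum.inr) ⬝ᵥ c) := by
    intro x y
    rw [dotProduct_smul, smul_eq_mul, dotProduct_sub, dotProduct_add]
  rw [e1, e2, e3, e1, e2, e3, hx, hy, hl, Matrix.mulVec_sub, Matrix.mulVec_sub]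
  simp only [dotProduct_sub, sub_dotProduct]
  ring

/-- contraction inequality for the relaxed proximal point step
with relaxation factor `γ ∈ (0, 2)`. -/
theorem stmt12 {m n l : ℕ}
    (f : (Fin m → ℝ) → ℝ) (g : (Fin n → ℝ) → ℝ)
    (hf : ConvexOn ℝ Set.univ f) (hg : ConvexOn ℝ Set.univ g)
    (X : Set (Fin m → ℝ)) (Y : Set (Fin n → ℝ))
    (hXcl : IsClosed X) (hXcv : Convex ℝ X) (hYcl : IsClosed Y) (hYcv : Convex ℝ Y)
    (A : Matrix (Fin l) (Fin m) ℝ) (B : Matrix (Fin l) (Fin n) ℝ)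
    (c : Fin l → ℝ) (τ : ℝ) (hτ : τ ≠ 0)
    (M : Set ((Fin m ⊕ (Fin n ⊕ Fin l)) → ℝ))
    (hM : M = {w | (w ∘ Sum.inl) ∈ X ∧ (w ∘ Sum.inr ∘ Sum.inl) ∈ Y})
    (φ : ((Fin m ⊕ (Fin n ⊕ Fin l)) → ℝ) → ℝ)
    (hφ : φ = fun w => f (w ∘ Sum.inl) + g (w ∘ Sum.inr ∘ Sum.inl))
    (J : ((Fin m ⊕ (Fin n ⊕ Fin l)) → ℝ) → ((Fin m ⊕ (Fin n ⊕ Fin l)) → ℝ))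
    (hJ : J = fun w => Sum.elim (τ • (-(Aᵀ *ᵥ (w ∘ Sum.inr ∘ Sum.inr))))
        (Sum.elim (τ • (-(Bᵀ *ᵥ (w ∘ Sum.inr ∘ Sum.inr))))
          (τ • (A *ᵥ (w ∘ Sum.inl) + B *ᵥ (w ∘ Sum.inr ∘ Sum.inl) - c))))
    (G : Matrix (Fin m ⊕ (Fin n ⊕ Fin l)) (Fin m ⊕ (Fin n ⊕ Fin l)) ℝ)
    (hG : G.PosDef)
    (wk wtilde : (Fin m ⊕ (Fin n ⊕ Fin l)) → ℝ) (hwtilde : wtilde ∈ M)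
    (hineq : ∀ w ∈ M,
      φ w - φ wtilde + (w - wtilde) ⬝ᵥ (J wtilde + G *ᵥ (wtilde - wk)) ≥ 0)
    (γ : ℝ) (hγ₀ : 0 < γ) (hγ₂ : γ < 2)
    (wk1 : (Fin m ⊕ (Fin n ⊕ Fin l)) → ℝ)
    (hwk1 : wk1 = wk + γ • (wtilde - wk))
    (wstar : (Fin m ⊕ (Fin n ⊕ Fin l)) → ℝ) (hwstarM : wstar ∈ M)
    (hwstar : ∀ w ∈ M, φ w - φ wstar + (w - wstar) ⬝ᵥ J wstar ≥ 0) :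
    (wk1 - wstar) ⬝ᵥ (G *ᵥ (wk1 - wstar)) ≤
      (wk - wstar) ⬝ᵥ (G *ᵥ (wk - wstar)) -
        γ * (2 - γ) * ((wtilde - wk) ⬝ᵥ (G *ᵥ (wtilde - wk))) := by
  have hGt : Gᵀ = G := by
    have := hG.isHermitian
    simpa [Matrix.IsHermitian, Matrix.conjTranspose_eq_transpose_of_trivial] using this
  have hsym : ∀ x y : (Fin m ⊕ (Fin n ⊕ Fin l)) → ℝ,
      x ⬝ᵥ (G *ᵥ y) = y ⬝ᵥ (G *ᵥ x) := by
    intro x y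
    rw [dotProduct_mulVec, ← hGt, vecMul_transpose, hGt, dotProduct_comm]
  set a := wk - wstar with ha
  set b := wtilde - wk with hb
  have hab : wtilde - wstar = a + b := by funext i; simp [ha, hb]
  have hwks : wk1 - wstar = a + γ • b := by
    funext i; simp [hwk1, ha, hb]; ring
  -- key inequality
  have h1 := hineq wstar hwstarM
  have h2 := hwstar wtilde hwtilde
  have hs := skewJ A B c τ J hJ wtilde wstar
  have hneg : wstar - wtilde = -(wtilde - wstar) := (neg_sub _ _).symm
  rw [hneg, dotProduct_add, neg_dotProduct, neg_dotProduct] at h1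
  have h3 : (a + b) ⬝ᵥ (G *ᵥ b) ≤ 0 := by
    rw [← hab]; linarith [h1, h2, hs]
  have h4 : a ⬝ᵥ (G *ᵥ b) ≤ -(b ⬝ᵥ (G *ᵥ b)) := by
    rw [add_dotProduct] at h3; linarith
  have expand : (a + γ • b) ⬝ᵥ (G *ᵥ (a + γ • b))
      = a ⬝ᵥ (G *ᵥ a) + 2 * γ * (a ⬝ᵥ (G *ᵥ b)) + γ ^ 2 * (b ⬝ᵥ (G *ᵥ b)) := by
    rw [Matrix.mulVec_add, Matrix.mulVec_smul, dotProduct_add, add_dotProduct,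
      add_dotProduct, dotProduct_smul, dotProduct_smul, smul_dotProduct,
      smul_dotProduct, hsym b a]
    simp only [smul_eq_mul]
    ring
  rw [hwks, expand]
  nlinarith [mul_le_mul_of_nonneg_left h4 (le_of_lt hγ₀)]
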